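/- Let E be a Banach space with a 1-unconditional finite dimensional decomposition with associated projections (π_m), let J = (m_j) be an increasing sequence of positive integers, σ_j = π_{m_j} − π_{m_{j−1}}, and let D_J(ⁿE) = { P ∈ P(ⁿE) : P(x) = Σ_j P(σ_j x) for all x } be the block diagonal n-homogeneous polynomials. If the subspace D_{J,w}(ⁿE) of weakly-continuous-on-bounded-sets block diagonal polynomials is an M-summand in D_J(ⁿE), then D_{J,w}(ⁿE) = D_J(ⁿE). -/

import Mathlib

set_option linter.unusedSectionVars false

open Filter Topology

universe u v

section PolyDefs

variable {E : Type u} [NormedAddCommGroup E] [NormedSpace ℝ E]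

/-- `P` is a continuous `n`-homogeneous scalar polynomial on `E`. -/
def IsHomogPoly (n : ℕ) (P : E → ℝ) : Prop :=
  ∃ M : ContinuousMultilinearMap ℝ (fun _ : Fin n => E) ℝ, ∀ x, P x = M (fun _ => x)

/-- The polynomial (sup) norm: `‖P‖ = sup_{‖x‖ ≤ 1} |P x|`. -/
noncomputable def polyNorm (P : E → ℝ) : ℝ :=
  sSup {r : ℝ | ∃ x : E, ‖x‖ ≤ 1 ∧ r = |P x|}

/-- A net is (norm) bounded. -/
def BoundedNet {ι : Type v} (x : ι → E) : Prop := ∃ C : ℝ, ∀ i, ‖x i‖ ≤ C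

/-- The net `x` converges weakly to `x₀` along the filter `l`. -/
def WeaklyTendsto {ι : Type v} (x : ι → E) (l : Filter ι) (x₀ : E) : Prop :=
  ∀ γ : E →L[ℝ] ℝ, Tendsto (fun i => γ (x i)) l (𝓝 (γ x₀))

/-- `P` is weakly continuous on bounded sets at the point `x₀`. -/
def WCBat (P : E → ℝ) (x₀ : E) : Prop :=
  ∀ (ι : Type u) (l : Filter ι), l.NeBot → ∀ x : ι → E,
    BoundedNet x → WeaklyTendsto x l x₀ → Tendsto (fun i => P (x i)) l (𝓝 (P x₀))

/-- `P ∈ P_w(ⁿE)`: continuous `n`-homogeneous and weakly continuous on bounded sets. -/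
def WCB (n : ℕ) (P : E → ℝ) : Prop := IsHomogPoly n P ∧ ∀ x₀ : E, WCBat P x₀

/-- `P ∈ P_{w0}(ⁿE)`: weakly continuous on bounded sets at `0`. -/
def WCB0 (n : ℕ) (P : E → ℝ) : Prop := IsHomogPoly n P ∧ WCBat P 0

end PolyDefs

section Helpers

variable {E : Type u} [NormedAddCommGroup E] [NormedSpace ℝ E]

lemma poly_bdd {n : ℕ} {P : E → ℝ} (hP : IsHomogPoly n P) :
    BddAbove {r : ℝ | ∃ x : E, ‖x‖ ≤ 1 ∧ r = |P x|} := by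
  obtain ⟨M, hM⟩ := hP
  refine ⟨‖M‖, ?_⟩
  rintro r ⟨x, hx, rfl⟩
  rw [hM]
  have h1 : ‖M (fun _ => x)‖ ≤ ‖M‖ * ∏ _i : Fin n, ‖x‖ := M.le_opNorm _
  have h2 : (∏ _i : Fin n, ‖x‖) = ‖x‖ ^ n := by simp
  rw [h2] at h1
  have h3 : ‖x‖ ^ n ≤ 1 := pow_le_one₀ (norm_nonneg x) hx
  calc |M fun _ => x| = ‖M fun _ => x‖ := (Real.norm_eq_abs _).symm
    _ ≤ ‖M‖ * ‖x‖ ^ n := h1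
    _ ≤ ‖M‖ * 1 := mul_le_mul_of_nonneg_left h3 (norm_nonneg M)
    _ = ‖M‖ := mul_one _

lemma polySet_nonempty (P : E → ℝ) :
    Set.Nonempty {r : ℝ | ∃ x : E, ‖x‖ ≤ 1 ∧ r = |P x|} :=
  ⟨|P 0|, 0, by simp, rfl⟩

lemma abs_le_polyNorm {n : ℕ} {P : E → ℝ} (hP : IsHomogPoly n P) {x : E} (hx : ‖x‖ ≤ 1) :
    |P x| ≤ polyNorm P :=
  le_csSup (poly_bdd hP) ⟨x, hx, rfl⟩

lemma polyNorm_le {P : E → ℝ} {C : ℝ} (h : ∀ x : E, ‖x‖ ≤ 1 → |P x| ≤ C) :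
    polyNorm P ≤ C :=
  csSup_le (polySet_nonempty P) (by rintro r ⟨x, hx, rfl⟩; exact h x hx)

lemma polyNorm_nonneg {n : ℕ} {P : E → ℝ} (hP : IsHomogPoly n P) : 0 ≤ polyNorm P :=
  le_trans (abs_nonneg _) (abs_le_polyNorm hP (x := 0) (by simp))

end Helpers

section Proj

variable {E : Type u} [NormedAddCommGroup E] [NormedSpace ℝ E]
variable {π : ℕ → E →L[ℝ] E} {m : ℕ → ℕ} {σf : ℕ → E → E}

lemma sigma_pi (hcomm : ∀ j k : ℕ, j ≤ k → ∀ x, π j (π k x) = π j x ∧ π k (π j x) = π j x)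
    (hm : StrictMono m) (hσ : ∀ j x, σf j x = π (m (j + 1)) x - π (m j) x)
    (N j : ℕ) (x : E) : σf j (π (m N) x) = if j < N then σf j x else 0 := by
  rw [hσ]
  by_cases hj : j < N
  · rw [if_pos hj, (hcomm (m (j+1)) (m N) (hm.monotone (Nat.succ_le_of_lt hj)) x).1,
      (hcomm (m j) (m N) (hm.monotone hj.le) x).1]
    exact (hσ j x).symm
  · push_neg at hj
    rw [if_neg (by omega), (hcomm (m N) (m (j+1)) (hm.monotone (by omega)) x).2,
      (hcomm (m N) (m j) (hm.monotone hj) x).2, sub_self]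

lemma pi_sigma (hcomm : ∀ j k : ℕ, j ≤ k → ∀ x, π j (π k x) = π j x ∧ π k (π j x) = π j x)
    (hm : StrictMono m) (hσ : ∀ j x, σf j x = π (m (j + 1)) x - π (m j) x)
    (N j : ℕ) (x : E) : π (m N) (σf j x) = if j < N then σf j x else 0 := by
  rw [hσ, map_sub]
  by_cases hj : j < N
  · rw [if_pos hj, (hcomm (m (j+1)) (m N) (hm.monotone (Nat.succ_le_of_lt hj)) x).2,
      (hcomm (m j) (m N) (hm.monotone hj.le) x).2]
  · push_neg at hj
    rw [if_neg (by omega), (hcomm (m N) (m (j+1)) (hm.monotone (by omega)) x).1,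
      (hcomm (m N) (m j) (hm.monotone hj) x).1, sub_self]

lemma sum_sigma (hm0 : π (m 0) = 0) (hσ : ∀ j x, σf j x = π (m (j + 1)) x - π (m j) x)
    (K : ℕ) (x : E) : ∑ j ∈ Finset.range K, σf j x = π (m K) x := by
  induction K with
  | zero => simp [hm0]
  | succ K ih => rw [Finset.sum_range_succ, ih, hσ]; abel

lemma pi_norm_le
    (hcomm : ∀ j k : ℕ, j ≤ k → ∀ x, π j (π k x) = π j x ∧ π k (π j x) = π j x)
    (htend : ∀ x : E, Tendsto (fun k => π k x) atTop (𝓝 x))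
    (hm : StrictMono m) (hm0 : π (m 0) = 0)
    (hσ : ∀ j x, σf j x = π (m (j + 1)) x - π (m j) x)
    (huncond : ∀ ε : ℕ → ℝ, (∀ j, ε j = 1 ∨ ε j = -1) →
      ∀ (x s : E), HasSum (fun j => ε j • σf j x) s → ‖s‖ = ‖x‖)
    (N : ℕ) (x : E) : ‖π (m N) x‖ ≤ ‖x‖ := by
  set εs : ℕ → ℝ := fun j => if j < N then 1 else -1 with hεs
  have hεs1 : ∀ j, εs j = 1 ∨ εs j = -1 := by
    intro j; by_cases h : j < N <;> simp [εs, h]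
  have key : ∀ K, N ≤ K → ‖(2:ℝ) • π (m N) x - π (m K) x‖ = ‖π (m K) x‖ := by
    intro K hK
    have h0 : ∀ j ∉ Finset.range K, εs j • σf j (π (m K) x) = 0 := by
      intro j hj
      rw [sigma_pi hcomm hm hσ, if_neg (by simpa using hj), smul_zero]
    have hsum := hasSum_sum_of_ne_finset_zero (L := SummationFilter.unconditional ℕ) h0
    have hcongr : ∑ j ∈ Finset.range K, εs j • σf j (π (m K) x)
        = ∑ j ∈ Finset.range K, εs j • σf j x := by
      refine Finset.sum_congr rfl (fun j hj => ?_)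
      rw [sigma_pi hcomm hm hσ, if_pos (Finset.mem_range.mp hj)]
    rw [hcongr] at hsum
    have hsplit : ∑ j ∈ Finset.range K, εs j • σf j x
        = (2:ℝ) • π (m N) x - π (m K) x := by
      have e1 : ∀ j, εs j • σf j x = (2:ℝ) • (if j < N then σf j x else 0) - σf j x := by
        intro j
        by_cases h : j < N
        · simp only [εs, if_pos h, one_smul]
          rw [two_smul]; abel
        · simp only [εs, if_neg h, neg_smul, one_smul, smul_zero]
          abel
      rw [Finset.sum_congr rfl (fun j _ => e1 j), Finset.sum_sub_distrib, ← Finset.smul_sum]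
      have hite : ∑ j ∈ Finset.range K, (if j < N then σf j x else 0)
          = ∑ j ∈ Finset.range N, σf j x := by
        rw [← Finset.sum_subset (Finset.range_subset_range.mpr hK)
          (fun j _ hj => if_neg (by simpa using hj))]
        exact Finset.sum_congr rfl (fun j hj => if_pos (Finset.mem_range.mp hj))
      rw [hite, sum_sigma hm0 hσ, sum_sigma hm0 hσ]
    rw [hsplit] at hsum
    exact huncond εs hεs1 (π (m K) x) _ hsum
  have h1 : Tendsto (fun K => π (m K) x) atTop (𝓝 x) := (htend x).comp hm.tendsto_atTop
  have h2 : Tendsto (fun K => ‖π (m K) x‖) atTop (𝓝 ‖x‖) := h1.norm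
  have h3 : Tendsto (fun K => ‖(2:ℝ) • π (m N) x - π (m K) x‖) atTop
      (𝓝 ‖(2:ℝ) • π (m N) x - x‖) := (tendsto_const_nhds.sub h1).norm
  have h4 : ‖(2:ℝ) • π (m N) x - x‖ = ‖x‖ := by
    refine tendsto_nhds_unique h3 (h2.congr' ?_)
    filter_upwards [eventually_ge_atTop N] with K hK
    exact (key K hK).symm
  have h5 : ‖(2:ℝ) • π (m N) x‖ = 2 * ‖π (m N) x‖ := by
    rw [norm_smul]; simp
  have h6 : ‖(2:ℝ) • π (m N) x‖ ≤ ‖(2:ℝ) • π (m N) x - x‖ + ‖x‖ := by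
    calc ‖(2:ℝ) • π (m N) x‖ = ‖((2:ℝ) • π (m N) x - x) + x‖ := by rw [sub_add_cancel]
      _ ≤ _ := norm_add_le _ _
  rw [h4, h5] at h6
  linarith

end Proj

section FinRank

variable {E : Type u} [NormedAddCommGroup E] [NormedSpace ℝ E]

lemma wcb_comp_finrank {n : ℕ} (T : E →L[ℝ] E)
    (hfinT : FiniteDimensional ℝ (LinearMap.range (T : E →ₗ[ℝ] E)))
    (M : ContinuousMultilinearMap ℝ (fun _ : Fin n => E) ℝ) (x₀ : E) :
    WCBat (fun x => M (fun _ => T x)) x₀ := by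
  intro ι l hl x hb hw
  set V := LinearMap.range (T : E →ₗ[ℝ] E) with hV
  haveI : FiniteDimensional ℝ V := hfinT
  let Tc : E →L[ℝ] V := T.codRestrict V (fun y => LinearMap.mem_range_self _ y)
  let b := Module.finBasis ℝ V
  let γ : Fin (Module.finrank ℝ V) → E →L[ℝ] ℝ :=
    fun k => (LinearMap.toContinuousLinearMap (b.coord k)).comp Tc
  have hrep : ∀ y : E, T y = ∑ k, γ k y • ((b k : V) : E) := by
    intro y
    have h1 : (Tc y : V) = ∑ k, b.repr (Tc y) k • b k := (b.sum_repr (Tc y)).symm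
    have h2 : T y = ((Tc y : V) : E) := rfl
    rw [h2, h1]
    push_cast
    refine Finset.sum_congr rfl (fun k _ => ?_)
    congr 1
  have step1 : Tendsto (fun i => T (x i)) l (𝓝 (T x₀)) := by
    have h := tendsto_finset_sum (Finset.univ)
      (fun k (_ : k ∈ Finset.univ) => (hw (γ k)).smul_const ((b k : V) : E))
    simp only [← hrep] at h
    exact h
  have step2 : Continuous (fun y : E => M (fun _ => y)) :=
    M.cont.comp (continuous_pi (fun _ => continuous_id))
  exact ((step2.tendsto (T x₀)).comp step1 : _)

lemma dj_zero {σf : ℕ → E → E} {z : E → ℝ} (hσ0 : ∀ j, σf j (0:E) = 0)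
    (hz : ∀ x, HasSum (fun j => z (σf j x)) (z x)) : z 0 = 0 := by
  have h := hz 0
  simp only [hσ0] at h
  have h1 : Tendsto (fun _ : ℕ => z 0) atTop (𝓝 0) := h.summable.tendsto_atTop_zero
  exact tendsto_nhds_unique tendsto_const_nhds h1

end FinRank

/-- If the weakly continuous block diagonal polynomials form an M-summand in the block
diagonal polynomials `D_J(ⁿE)` (for a 1-unconditional FDD), they are all of `D_J(ⁿE)`. -/
theorem stmt17 {E : Type u} [NormedAddCommGroup E] [NormedSpace ℝ E] (n : ℕ)
    (π : ℕ → E →L[ℝ] E)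
    (hfin : ∀ k, FiniteDimensional ℝ (LinearMap.range (π k : E →ₗ[ℝ] E)))
    (hcomm : ∀ j k : ℕ, j ≤ k → ∀ x, π j (π k x) = π j x ∧ π k (π j x) = π j x)
    (htend : ∀ x : E, Tendsto (fun k => π k x) atTop (𝓝 x))
    (m : ℕ → ℕ) (hm : StrictMono m) (hm0 : π (m 0) = 0)
    (σf : ℕ → E → E) (hσ : ∀ j x, σf j x = π (m (j + 1)) x - π (m j) x)
    (huncond : ∀ ε : ℕ → ℝ, (∀ j, ε j = 1 ∨ ε j = -1) →
      ∀ (x s : E), HasSum (fun j => ε j • σf j x) s → ‖s‖ = ‖x‖)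
    (DJ : Set (E → ℝ))
    (hDJ : DJ = {P : E → ℝ | IsHomogPoly n P ∧ ∀ x, HasSum (fun j => P (σf j x)) (P x)})
    (h : ∃ S ⊆ DJ,
      (∀ P ∈ S, ∀ Q ∈ S, (fun x => P x + Q x) ∈ S) ∧
      (∀ c : ℝ, ∀ P ∈ S, (fun x => c * P x) ∈ S) ∧
      (∀ P ∈ DJ, ∃! yz : (E → ℝ) × (E → ℝ),
        (yz.1 ∈ DJ ∧ WCB n yz.1) ∧ yz.2 ∈ S ∧ P = fun x => yz.1 x + yz.2 x) ∧
      (∀ y ∈ DJ, WCB n y → ∀ z ∈ S,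
        polyNorm (fun x => y x + z x) = max (polyNorm y) (polyNorm z))) :
    ∀ P ∈ DJ, WCB n P := by
  intro P hP
  obtain ⟨S, hSDJ, hadd, hsmul, hdecomp, hMn⟩ := h
  obtain ⟨⟨y, z⟩, ⟨⟨hyDJ, hyW⟩, hzS, hPyz⟩, -⟩ := hdecomp P hP
  have hzDJ : z ∈ DJ := hSDJ hzS
  rw [hDJ] at hzDJ
  obtain ⟨⟨Mz, hMz⟩, hzsum⟩ := hzDJ
  have hσ0 : ∀ j, σf j (0:E) = 0 := fun j => by simp [hσ]
  have hz0 : z 0 = 0 := dj_zero hσ0 hzsum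
  suffices hz00 : ∀ x, z x = 0 by
    have hPy : P = y := by
      funext x
      rw [hPyz]
      simp [hz00]
    rw [hPy]
    exact hyW
  by_cases hc : polyNorm z = 0
  · intro x
    rcases eq_or_ne x 0 with rfl | hx
    · exact hz0
    · have hx' : ‖x‖ ≠ 0 := by simpa using hx
      have h1 : z x = (∏ _i : Fin n, ‖x‖) * z (‖x‖⁻¹ • x) := by
        rw [hMz, hMz]
        have hxx : (fun _ : Fin n => x) = fun _ : Fin n => ‖x‖ • (‖x‖⁻¹ • x) := by
          funext _; rw [smul_inv_smul₀ hx']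
        rw [hxx, ContinuousMultilinearMap.map_smul_univ]
        simp [smul_eq_mul]
      have h2 : ‖‖x‖⁻¹ • x‖ ≤ 1 := by
        rw [norm_smul]
        simp [hx']
      have h3 : |z (‖x‖⁻¹ • x)| ≤ polyNorm z := abs_le_polyNorm ⟨Mz, hMz⟩ h2
      rw [hc] at h3
      have h4 : z (‖x‖⁻¹ • x) = 0 := abs_eq_zero.mp (le_antisymm h3 (abs_nonneg _))
      rw [h1, h4, mul_zero]
  exfalso
  set c := polyNorm z with hcdef
  have hc0 : 0 < c := lt_of_le_of_ne (polyNorm_nonneg ⟨Mz, hMz⟩) (Ne.symm hc)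
  obtain ⟨r, ⟨x₀, hx₀, hr⟩, hrgt⟩ :=
    exists_lt_of_lt_csSup (polySet_nonempty z) (show c * (3/4) < c by linarith)
  -- sign normalization
  set e : ℝ := if 0 ≤ z x₀ then 1 else -1 with he
  have he1 : e = 1 ∨ e = -1 := by
    by_cases hh : 0 ≤ z x₀ <;> simp [e, hh]
  have habs_e : ∀ t : ℝ, |e * t| = |t| := by
    intro t; rcases he1 with hh | hh <;> rw [hh] <;> simp
  set z₁ : E → ℝ := fun x => e * z x with hz₁
  have hz₁S : z₁ ∈ S := hsmul e z hzS
  have hz₁hom : IsHomogPoly n z₁ := ⟨e • Mz, fun x => by simp [hz₁, hMz x, smul_eq_mul]⟩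
  have hz₁sum : ∀ x, HasSum (fun j => z₁ (σf j x)) (z₁ x) := fun x => (hzsum x).mul_left e
  have hz₁x₀ : z₁ x₀ = |z x₀| := by
    simp only [hz₁, he]
    by_cases hh : 0 ≤ z x₀
    · rw [if_pos hh, one_mul, abs_of_nonneg hh]
    · rw [if_neg hh, neg_one_mul, abs_of_neg (lt_of_not_ge hh)]
  have hpz₁ : polyNorm z₁ = c := by
    rw [hcdef]
    unfold polyNorm
    congr 1
    ext t
    simp only [Set.mem_setOf_eq, hz₁]
    constructor
    · rintro ⟨x, hx, rfl⟩; exact ⟨x, hx, habs_e _⟩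
    · rintro ⟨x, hx, rfl⟩; exact ⟨x, hx, (habs_e _).symm⟩
  have hz₁x₀gt : c * (3/4) < z₁ x₀ := by rw [hz₁x₀, ← hr]; exact hrgt
  obtain ⟨N, hN⟩ := ((hz₁sum x₀).tendsto_sum_nat.eventually (eventually_gt_nhds hz₁x₀gt)).exists
  set T := π (m N) with hT
  set Q : E → ℝ := fun x => z₁ (T x) with hQdef
  have hz₁0 : z₁ 0 = 0 := by rw [hz₁]; simp [hz0]
  have hQhom : IsHomogPoly n Q :=
    ⟨(e • Mz).compContinuousLinearMap (fun _ => T), fun x => by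
      simp [hQdef, hz₁, hMz, smul_eq_mul]⟩
  have hQval : ∀ x, Q x = ∑ j ∈ Finset.range N, z₁ (σf j x) := by
    intro x
    have h1 := hz₁sum (T x)
    have h2 : ∀ j, z₁ (σf j (T x)) = if j < N then z₁ (σf j x) else 0 := by
      intro j
      rw [hT, sigma_pi hcomm hm hσ]
      by_cases hj : j < N
      · rw [if_pos hj, if_pos hj]
      · rw [if_neg hj, if_neg hj, hz₁0]
    simp only [h2] at h1
    have h3 : HasSum (fun j => if j < N then z₁ (σf j x) else 0)
        (∑ j ∈ Finset.range N, (if j < N then z₁ (σf j x) else 0)) :=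
      hasSum_sum_of_ne_finset_zero (fun j hj => if_neg (by simpa using hj))
    have h4 := h1.unique h3
    rw [hQdef]
    simp only []
    rw [h4]
    exact Finset.sum_congr rfl fun j hj => if_pos (Finset.mem_range.mp hj)
  have hQsig : ∀ x j, Q (σf j x) = if j < N then z₁ (σf j x) else 0 := by
    intro x j
    rw [hQdef]
    simp only []
    rw [hT, pi_sigma hcomm hm hσ]
    by_cases hj : j < N
    · rw [if_pos hj, if_pos hj]
    · rw [if_neg hj, if_neg hj, hz₁0]
  have hQDJ : Q ∈ DJ := by
    rw [hDJ]
    refine ⟨hQhom, fun x => ?_⟩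
    have h3 := hasSum_sum_of_ne_finset_zero (L := SummationFilter.unconditional ℕ) (s := Finset.range N)
      (f := fun j => Q (σf j x))
      (fun j hj => by
        show Q (σf j x) = 0
        rw [hQsig]
        exact if_neg (by simpa using hj))
    have h4 : ∑ j ∈ Finset.range N, Q (σf j x) = Q x := by
      rw [hQval x]
      exact Finset.sum_congr rfl fun j hj => by
        rw [hQsig, if_pos (Finset.mem_range.mp hj)]
    rwa [h4] at h3
  have hQeq : Q = fun x => (e • Mz) (fun _ => T x) := by
    funext x
    simp [hQdef, hz₁, hMz, smul_eq_mul]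
  have hQW : WCB n Q := by
    refine ⟨hQhom, fun x₀' => ?_⟩
    rw [hQeq]
    exact wcb_comp_finrank T (hfin (m N)) (e • Mz) x₀'
  have hQle : polyNorm Q ≤ c := by
    refine polyNorm_le (fun x hx => ?_)
    have h1 : ‖T x‖ ≤ ‖x‖ := pi_norm_le hcomm htend hm hm0 hσ huncond N x
    have h2 : |z₁ (T x)| ≤ polyNorm z₁ := abs_le_polyNorm hz₁hom (le_trans h1 hx)
    rw [hpz₁] at h2
    exact h2
  have hmax := hMn Q hQDJ hQW z₁ hz₁S
  have hsum_hom : IsHomogPoly n (fun x => Q x + z₁ x) :=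
    ⟨(e • Mz).compContinuousLinearMap (fun _ => T) + e • Mz, fun x => by
      simp [hQdef, hz₁, hMz, smul_eq_mul]⟩
  have hlow : |Q x₀ + z₁ x₀| ≤ polyNorm (fun x => Q x + z₁ x) :=
    abs_le_polyNorm hsum_hom hx₀
  have hQx₀ : c * (3/4) < Q x₀ := by rw [hQval x₀]; exact hN
  have hlow2 : c * (3/4) + c * (3/4) ≤ |Q x₀ + z₁ x₀| :=
    le_trans (by linarith) (le_abs_self _)
  rw [hmax] at hlow
  have hub : max (polyNorm Q) (polyNorm z₁) ≤ c := max_le hQle (le_of_eq hpz₁)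
  linarith
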